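/- Let (I, C_f, Z) ∈ 𝒮, where C_f is the companion matrix of the monic irreducible cubic f. Then the multiplication ∘ on 𝔽_q³ defined by x ∘ y := (x₁I + x₂C_f + x₃Z)·y is associative if and only if Z = C_f²; in that case (𝔽_q³, +, ∘) is isomorphic to the field 𝔽_{q³}. -/

import Mathlib

open Matrix Polynomial

/-- A `[3×3;3]`-MRD code: a 3-dimensional `F`-subspace of the `3×3` matrices over `F`
in which every nonzero matrix is invertible. -/
def IsMRD (F : Type*) [Field F] [Fintype F]
    (Cc : Submodule F (Matrix (Fin 3) (Fin 3) F)) : Prop :=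
  Module.finrank F Cc = 3 ∧ ∀ M ∈ Cc, M ≠ 0 → IsUnit M

/-- The companion matrix `C_f` of `f = x³ - c·x² - b·x - a`, with rows
`(0,0,a)`, `(1,0,b)`, `(0,1,c)`. -/
def cMat (F : Type*) [Field F] (a b c : F) : Matrix (Fin 3) (Fin 3) F :=
  !![0, 0, a; 1, 0, b; 0, 1, c]

/-- The monic cubic `x³ - c·x² - b·x - a`. -/
noncomputable def cubic (F : Type*) [Field F] (a b c : F) : Polynomial F :=
  X ^ 3 - C c * X ^ 2 - C b * X - C a

/-- The set `𝒮` of triples `(I, C_f, Z)` with `f` a monic irreducible cubic,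
`Z` having first column `(0,0,1)ᵀ`, and the span of `{I, C_f, Z}` a `[3×3;3]`-MRD code. -/
def mrdS (F : Type*) [Field F] [Fintype F] :
    Set (Matrix (Fin 3) (Fin 3) F × Matrix (Fin 3) (Fin 3) F × Matrix (Fin 3) (Fin 3) F) :=
  {t | t.1 = 1 ∧
       (∃ a b c : F, Irreducible (cubic F a b c) ∧ t.2.1 = cMat F a b c) ∧
       t.2.2 0 0 = 0 ∧ t.2.2 1 0 = 0 ∧ t.2.2 2 0 = 1 ∧
       IsMRD F (Submodule.span F {t.1, t.2.1, t.2.2})}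

/-- `T_q`: all 3-dimensional subspaces of `F^{3×3}`. -/
def Tset (F : Type*) [Field F] [Fintype F] : Set (Submodule F (Matrix (Fin 3) (Fin 3) F)) :=
  {Cc | Module.finrank F Cc = 3}

/-- `T̂_q`: all `[3×3;3]`-MRD codes. -/
def ThatSet (F : Type*) [Field F] [Fintype F] : Set (Submodule F (Matrix (Fin 3) (Fin 3) F)) :=
  {Cc | IsMRD F Cc}

/-- The semifield multiplication `x ∘ y = (x₁·I + x₂·A + x₃·B)·y` attached to a
basis `(I, A, B)`. -/
def triMul (F : Type*) [Field F] (A B : Matrix (Fin 3) (Fin 3) F) (x y : Fin 3 → F) :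
    Fin 3 → F :=
  (x 0 • (1 : Matrix (Fin 3) (Fin 3) F) + x 1 • A + x 2 • B).mulVec y

lemma triMul_sq_eq (F : Type*) [Field F] (a b c : F) (x y : Fin 3 → F) :
    triMul F (cMat F a b c) (cMat F a b c ^ 2) x y =
    ![x 0 * y 0 + a * x 2 * y 1 + (a * x 1 + a * c * x 2) * y 2,
      x 1 * y 0 + (x 0 + b * x 2) * y 1 + (b * x 1 + (a + b * c) * x 2) * y 2,
      x 2 * y 0 + (x 1 + c * x 2) * y 1 + (x 0 + c * x 1 + (b + c * c) * x 2) * y 2] := by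
  funext i
  fin_cases i <;>
    simp [triMul, cMat, Matrix.mulVec, dotProduct, Fin.sum_univ_three, pow_two,
      Matrix.mul_apply, Matrix.one_apply] <;> ring

lemma semifield_iso (F : Type*) [Field F] [Fintype F] (a b c : F)
    (hf : Irreducible (cubic F a b c))
    (K : Type) [Field K] [Fintype K] (hK : Fintype.card K = Fintype.card F ^ 3) :
    ∃ e : (Fin 3 → F) ≃ K, (∀ x y : Fin 3 → F, e (x + y) = e x + e y) ∧
      ∀ x y : Fin 3 → F,
        e (triMul F (cMat F a b c) (cMat F a b c ^ 2) x y) = e x * e y := by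
  have hdeg : (cubic F a b c).natDegree = 3 := by
    unfold cubic; compute_degree!
  have hne : cubic F a b c ≠ 0 := by
    intro h0; rw [h0] at hdeg; simp at hdeg
  haveI : Fact (Irreducible (cubic F a b c)) := ⟨hf⟩
  set L := AdjoinRoot (cubic F a b c) with hL
  set r : L := AdjoinRoot.root (cubic F a b c) with hrdef
  let B : Module.Basis (Fin 3) F L :=
    ((AdjoinRoot.powerBasis hne).basis).reindex (finCongr hdeg)
  have hB : ∀ i : Fin 3, B i = r ^ (i : ℕ) := by
    intro i
    rw [Module.Basis.reindex_apply, PowerBasis.coe_basis]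
    simp [AdjoinRoot.powerBasis_gen]
    rfl
  haveI : Fintype L := Module.fintypeOfFintype B
  have cardL : Fintype.card L = Fintype.card K := by
    rw [Module.card_fintype B, Fintype.card_fin, hK]
  let ψ : L ≃+* K := FiniteField.ringEquivOfCardEq cardL
  let θ : (Fin 3 → F) ≃ₗ[F] L := B.equivFun.symm
  have hθ : ∀ v : Fin 3 → F, θ v =
      algebraMap F L (v 0) + algebraMap F L (v 1) * r + algebraMap F L (v 2) * r ^ 2 := by
    intro v
    simp only [θ, Module.Basis.equivFun_symm_apply, Fin.sum_univ_three, hB, Algebra.smul_def,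
      Fin.val_zero, Fin.val_one, Fin.val_two, pow_zero, pow_one, mul_one]
  have key : (aeval r) (cubic F a b c) = 0 := by
    rw [hrdef, AdjoinRoot.aeval_eq, AdjoinRoot.mk_self]
  have hr : r ^ 3 = algebraMap F L c * r ^ 2 + algebraMap F L b * r + algebraMap F L a := by
    have key2 := key
    simp only [cubic, map_sub, _root_.map_mul, map_pow, aeval_X, aeval_C] at key2
    linear_combination key2
  have hm : ∀ x y : Fin 3 → F,
      θ (triMul F (cMat F a b c) (cMat F a b c ^ 2) x y) = θ x * θ y := by
    intro x y
    rw [triMul_sq_eq, hθ, hθ, hθ]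
    simp only [Matrix.cons_val_zero, Matrix.cons_val_one, Matrix.head_cons,
      Matrix.cons_val_two, Matrix.tail_cons, map_add, _root_.map_mul]
    linear_combination
      (-(algebraMap F L (x 1) * algebraMap F L (y 2) + algebraMap F L (x 2) * algebraMap F L (y 1)
        + algebraMap F L c * (algebraMap F L (x 2) * algebraMap F L (y 2))
        + algebraMap F L (x 2) * algebraMap F L (y 2) * r)) * hr
  refine ⟨θ.toEquiv.trans ψ.toEquiv, ?_, ?_⟩
  · intro x y
    show ψ (θ (x + y)) = ψ (θ x) + ψ (θ y)
    rw [map_add, _root_.map_add]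
  · intro x y
    show ψ (θ _) = ψ (θ x) * ψ (θ y)
    rw [hm, _root_.map_mul]

/-- for `(I, C_f, Z) ∈ 𝒮`, the semifield multiplication is associative
iff `Z = C_f²`, in which case `(F³, +, ∘)` is isomorphic to the field with `q³`
elements. -/
theorem semifield_associative_iff (F : Type*) [Field F] [Fintype F]
    (a b c : F) (hf : Irreducible (cubic F a b c))
    (Z : Matrix (Fin 3) (Fin 3) F)
    (hZ0 : Z 0 0 = 0) (hZ1 : Z 1 0 = 0) (hZ2 : Z 2 0 = 1)
    (hmrd : IsMRD F (Submodule.span F {(1 : Matrix (Fin 3) (Fin 3) F), cMat F a b c, Z})) :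
    ((∀ x y z : Fin 3 → F,
        triMul F (cMat F a b c) Z (triMul F (cMat F a b c) Z x y) z =
          triMul F (cMat F a b c) Z x (triMul F (cMat F a b c) Z y z)) ↔
      Z = cMat F a b c ^ 2) ∧
    (Z = cMat F a b c ^ 2 →
      ∀ (K : Type) [Field K] [Fintype K], Fintype.card K = Fintype.card F ^ 3 →
        ∃ e : (Fin 3 → F) ≃ K, (∀ x y : Fin 3 → F, e (x + y) = e x + e y) ∧
          ∀ x y : Fin 3 → F, e (triMul F (cMat F a b c) Z x y) = e x * e y) := by
  constructor
  · constructor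
    · intro h
      ext i j
      have h1 := congrFun (h ![0,1,0] ![0,1,0] (fun k => if k = j then 1 else 0)) i
      fin_cases i <;> fin_cases j <;>
        simpa [triMul, cMat, Matrix.mulVec, dotProduct, Fin.sum_univ_three, pow_two,
          Matrix.mul_apply, Matrix.one_apply] using h1
    · rintro rfl
      intro x y z
      funext i
      fin_cases i <;>
        simp [triMul, cMat, Matrix.mulVec, dotProduct, Fin.sum_univ_three, pow_two,
          Matrix.mul_apply, Matrix.one_apply] <;> ring
  · rintro rfl
    intro K _ _ hK
    exact semifield_iso F a b c hf K hK
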